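/- Let E be a normed space in which every continuous linear functional attains its supremum on the closed unit ball (E is sup-reflexive). Then E contains no asymptotically isometric copy of ℓ¹(ℕ). (Assume the Hahn–Banach extension theorem.) -/

import Mathlib

open Filter

section Aux

variable {E : Type*} [NormedAddCommGroup E] [NormedSpace ℝ E]

/-- Given a sequence `(a m)` satisfying the `ℓ¹` lower estimate with weights `δ`, and any
prescribed values `c m` with `|c m| ≤ δ m`, there is a norm-`≤ 1` functional on `E` taking
the value `c m` at `a m`. -/
lemma exists_functional_prescribed (a : ℕ → E) (δ : ℕ → ℝ) (hδpos : ∀ n, 0 < δ n)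
    (hl : ∀ (n : ℕ) (lam : ℕ → ℝ),
      ∑ i ∈ Finset.range (n+1), δ i * |lam i| ≤ ‖∑ i ∈ Finset.range (n+1), lam i • a i‖)
    (c : ℕ → ℝ) (hc : ∀ m, |c m| ≤ δ m) :
    ∃ f : E →L[ℝ] ℝ, ‖f‖ ≤ 1 ∧ ∀ m, f (a m) = c m := by
  classical
  -- the `a m` are linearly independent
  have hind : LinearIndependent ℝ a := by
    rw [linearIndependent_iff']
    intro s g hsum i hi
    have hsub : s ⊆ Finset.range (s.sup id + 1) := fun j hj =>
      Finset.mem_range.mpr (Nat.lt_succ_of_le (Finset.le_sup (f := id) hj))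
    set lam : ℕ → ℝ := fun j => if j ∈ s then g j else 0 with hlam
    have hzero : ∑ j ∈ Finset.range (s.sup id + 1), lam j • a j = 0 := by
      rw [← Finset.sum_subset hsub (fun x _ hx => by simp [hlam, hx])]
      rw [← hsum]
      exact Finset.sum_congr rfl fun j hj => by simp [hlam, hj]
    have h0 := hl (s.sup id) lam
    rw [hzero, norm_zero] at h0
    have hnn : ∀ j ∈ Finset.range (s.sup id + 1), 0 ≤ δ j * |lam j| :=
      fun j _ => mul_nonneg (hδpos j).le (abs_nonneg _)
    have hall := (Finset.sum_eq_zero_iff_of_nonneg hnn).mp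
      (le_antisymm h0 (Finset.sum_nonneg hnn))
    have hi' := hall i (hsub hi)
    have hgi : δ i * |g i| = 0 := by simpa [hlam, hi] using hi'
    rcases mul_eq_zero.mp hgi with h | h
    · exact absurd h (hδpos i).ne'
    · exact abs_eq_zero.mp h
  -- basis of the span
  let b : Module.Basis ℕ ℝ (Submodule.span ℝ (Set.range a)) := Module.Basis.span hind
  have hb : ∀ m, (b m : E) = a m := fun m => congrArg Subtype.val (Module.Basis.span_apply hind m)
  -- the linear functional on the span with prescribed values
  let ψ : (Submodule.span ℝ (Set.range a)) →ₗ[ℝ] ℝ :=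
    (Finsupp.linearCombination ℝ c).comp (b.repr : _ →ₗ[ℝ] (ℕ →₀ ℝ))
  have hψb : ∀ m, ψ (b m) = c m := by
    intro m
    simp [ψ, Module.Basis.repr_self, Finsupp.linearCombination_single]
  have hψ : ∀ u : (Submodule.span ℝ (Set.range a)), |ψ u| ≤ ‖u‖ := by
    intro u
    set r := b.repr u with hrdef
    have hsubr : r.support ⊆ Finset.range (r.support.sup id + 1) := fun j hj =>
      Finset.mem_range.mpr (Nat.lt_succ_of_le (Finset.le_sup (f := id) hj))
    have hval : ψ u = ∑ j ∈ Finset.range (r.support.sup id + 1), r j * c j := by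
      have h1 : ψ u = ∑ j ∈ r.support, r j * c j := by
        simp only [ψ, LinearMap.comp_apply, LinearEquiv.coe_coe, ← hrdef,
          Finsupp.linearCombination_apply, Finsupp.sum, smul_eq_mul]
      rw [h1]
      exact Finset.sum_subset hsubr fun x _ hx => by
        simp [Finsupp.notMem_support_iff.mp hx]
    have hcoe : (u : E) = ∑ j ∈ Finset.range (r.support.sup id + 1), r j • a j := by
      have h1 : (Finsupp.linearCombination ℝ (b : ℕ → (Submodule.span ℝ (Set.range a)))) r = u :=
        b.linearCombination_repr u
      have h2 : (u : E) =
          ∑ j ∈ r.support, r j • (b j : E) := by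
        conv_lhs => rw [← h1]
        rw [Finsupp.linearCombination_apply, Finsupp.sum]
        push_cast
        rfl
      rw [h2]
      rw [Finset.sum_subset hsubr fun x _ hx => by
        simp [Finsupp.notMem_support_iff.mp hx]]
      exact Finset.sum_congr rfl fun j _ => by rw [hb j]
    calc |ψ u| = |∑ j ∈ Finset.range (r.support.sup id + 1), r j * c j| := by rw [hval]
      _ ≤ ∑ j ∈ Finset.range (r.support.sup id + 1), |r j * c j| :=
          Finset.abs_sum_le_sum_abs _ _
      _ ≤ ∑ j ∈ Finset.range (r.support.sup id + 1), δ j * |r j| := by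
          refine Finset.sum_le_sum fun j _ => ?_
          rw [abs_mul, mul_comm]
          exact mul_le_mul_of_nonneg_right (hc j) (abs_nonneg _)
      _ ≤ ‖∑ j ∈ Finset.range (r.support.sup id + 1), r j • a j‖ :=
          hl (r.support.sup id) (fun j => r j)
      _ = ‖(u : E)‖ := by rw [← hcoe]
      _ = ‖u‖ := rfl
  let ψc : (Submodule.span ℝ (Set.range a)) →L[ℝ] ℝ :=
    ψ.mkContinuous 1 fun u => by rw [Real.norm_eq_abs, one_mul]; exact hψ u
  obtain ⟨f, hfext, hfnorm⟩ := exists_extension_norm_eq (Submodule.span ℝ (Set.range a)) ψc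
  refine ⟨f, ?_, ?_⟩
  · rw [hfnorm]
    exact ψ.mkContinuous_norm_le zero_le_one _
  · intro m
    have hmem : a m ∈ Submodule.span ℝ (Set.range a) :=
      Submodule.subset_span ⟨m, rfl⟩
    have hub : (⟨a m, hmem⟩ : Submodule.span ℝ (Set.range a)) = b m :=
      Subtype.ext (hb m).symm
    have h3 := hfext ⟨a m, hmem⟩
    have h4 : f (a m) = ψc ⟨a m, hmem⟩ := h3
    rw [h4, hub]
    exact hψb m

end Aux

/-- A sup-reflexive normed space contains no asymptotically isometric copy of `ℓ¹(ℕ)`. -/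
theorem supReflexive_no_asymptotically_isometric_l1 {E : Type*}
    [NormedAddCommGroup E] [NormedSpace ℝ E]
    (hsup : ∀ f : E →L[ℝ] ℝ, ∃ x : E, ‖x‖ ≤ 1 ∧ ∀ y : E, ‖y‖ ≤ 1 → f y ≤ f x) :
    ¬ ∃ (a : ℕ → E) (δ : ℕ → ℝ),
      (∀ n, ‖a n‖ ≤ 1) ∧ (∀ n, δ n ∈ Set.Ioo (0:ℝ) 1) ∧
      Tendsto δ atTop (nhds 1) ∧
      ∀ (n : ℕ) (lam : ℕ → ℝ),
        ∑ i ∈ Finset.range (n+1), δ i * |lam i| ≤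
          ‖∑ i ∈ Finset.range (n+1), lam i • a i‖ := by
  rintro ⟨a, δ, ha, hδ, hδ1, hl⟩
  classical
  have hδpos : ∀ n, 0 < δ n := fun n => (hδ n).1
  -- the sign-flip functionals
  have hfex : ∀ n : ℕ, ∃ f : E →L[ℝ] ℝ, ‖f‖ ≤ 1 ∧
      ∀ m, f (a m) = if n ≤ m then δ m else -δ m := by
    intro n
    refine exists_functional_prescribed a δ hδpos hl _ fun m => ?_
    by_cases h : n ≤ m <;> simp [h, abs_of_pos (hδpos m)]
  choose f hfnorm hfval using hfex
  have hfb : ∀ (n : ℕ) (v : E), |f n v| ≤ ‖v‖ := by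
    intro n v
    calc |f n v| = ‖f n v‖ := (Real.norm_eq_abs _).symm
      _ ≤ ‖f n‖ * ‖v‖ := (f n).le_opNorm v
      _ ≤ 1 * ‖v‖ := mul_le_mul_of_nonneg_right (hfnorm n) (norm_nonneg v)
      _ = ‖v‖ := one_mul _
  -- the ultrafilter-limit functional Φ
  have hUltra : ∀ v : E, ∃ L : ℝ,
      Tendsto (fun n => f n v) (Filter.hyperfilter ℕ : Filter ℕ) (nhds L) := by
    intro v
    have hle : ↑((Filter.hyperfilter ℕ).map fun n => f n v) ≤
        Filter.principal (Set.Icc (-‖v‖) ‖v‖) := by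
      rw [Filter.le_principal_iff]
      refine Filter.mem_map.mpr (Filter.univ_mem' fun n => ?_)
      exact Set.mem_Icc.mpr ⟨(abs_le.mp (hfb n v)).1, (abs_le.mp (hfb n v)).2⟩
    obtain ⟨L, -, hL⟩ := isCompact_Icc.ultrafilter_le_nhds _ hle
    refine ⟨L, ?_⟩
    rw [Ultrafilter.coe_map] at hL
    exact hL
  choose L hL using hUltra
  have hLadd : ∀ v w, L (v + w) = L v + L w := by
    intro v w
    refine tendsto_nhds_unique (hL (v + w)) ?_
    have h1 := (hL v).add (hL w)
    refine h1.congr fun n => ?_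
    rw [← map_add]
  have hLsmul : ∀ (t : ℝ) (v : E), L (t • v) = t * L v := by
    intro t v
    refine tendsto_nhds_unique (hL (t • v)) ?_
    have h1 := (hL v).const_mul t
    refine h1.congr fun n => ?_
    rw [map_smul, smul_eq_mul]
  have hLb : ∀ v, |L v| ≤ ‖v‖ := by
    intro v
    rw [abs_le]
    constructor
    · exact ge_of_tendsto (hL v) (Filter.Eventually.of_forall fun n => (abs_le.mp (hfb n v)).1)
    · exact le_of_tendsto (hL v) (Filter.Eventually.of_forall fun n => (abs_le.mp (hfb n v)).2)
  let Φ : E →L[ℝ] ℝ := LinearMap.mkContinuous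
    { toFun := L
      map_add' := hLadd
      map_smul' := fun t v => by simp [hLsmul t v] } 1
    (fun v => by rw [Real.norm_eq_abs, one_mul]; exact hLb v)
  have hΦ : ∀ v, Φ v = L v := fun v => rfl
  have hΦa : ∀ m, Φ (a m) = -δ m := by
    intro m
    have h2 : Tendsto (fun n => f n (a m)) (Filter.hyperfilter ℕ : Filter ℕ) (nhds (-δ m)) := by
      have hev : ∀ᶠ n in (Filter.hyperfilter ℕ : Filter ℕ), f n (a m) = -δ m := by
        have hevc : ∀ᶠ n in (Filter.cofinite : Filter ℕ), f n (a m) = -δ m := by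
          rw [Nat.cofinite_eq_atTop]
          filter_upwards [Filter.eventually_gt_atTop m] with n hn
          rw [hfval n m, if_neg (by omega)]
        exact hevc.filter_mono Filter.hyperfilter_le_cofinite
      exact Filter.Tendsto.congr' (Filter.EventuallyEq.symm hev) tendsto_const_nhds
    rw [hΦ]
    exact tendsto_nhds_unique (hL (a m)) h2
  -- the weights
  set w : ℕ → ℝ := fun n => (1/2 : ℝ)^(n+1) with hwdef
  have hwpos : ∀ n, 0 < w n := fun n => by positivity
  have hwsummable : Summable w := by
    refine (summable_geometric_two.mul_right (1/2 : ℝ)).congr fun n => ?_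
    simp [hwdef, pow_succ]
  have hwsum : ∑' n, w n = 1 := by
    have h2 : ∑' n, w n = ∑' n : ℕ, ((1:ℝ)/2)^n * (1/2) :=
      tsum_congr fun n => by simp [hwdef, pow_succ]
    rw [h2, tsum_mul_right, tsum_geometric_two]
    norm_num
  -- summability of the evaluations
  have hsummev : ∀ v : E, Summable (fun n => w n * f n v) := by
    intro v
    refine Summable.of_norm_bounded (hwsummable.mul_right ‖v‖) fun n => ?_
    rw [Real.norm_eq_abs, abs_mul, abs_of_pos (hwpos n)]
    exact mul_le_mul_of_nonneg_left (hfb n v) (hwpos n).le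
  -- the averaged functional g
  let gL : E →ₗ[ℝ] ℝ :=
    { toFun := fun v => ∑' n, w n * f n v
      map_add' := by
        intro v u
        show (∑' n, w n * f n (v + u)) = (∑' n, w n * f n v) + ∑' n, w n * f n u
        have h1 : (fun n => w n * f n (v + u)) = fun n => w n * f n v + w n * f n u := by
          ext n; rw [map_add]; ring
        rw [h1, Summable.tsum_add (hsummev v) (hsummev u)]
      map_smul' := by
        intro t v
        show (∑' n, w n * f n (t • v)) = (RingHom.id ℝ) t • ∑' n, w n * f n v
        have h1 : (fun n => w n * f n (t • v)) = fun n => t * (w n * f n v) := by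
          ext n; rw [map_smul, smul_eq_mul]; ring
        rw [h1, tsum_mul_left]
        simp [smul_eq_mul] }
  have hgLb : ∀ v, |gL v| ≤ ‖v‖ := by
    intro v
    have h1 : gL v ≤ ‖v‖ := by
      have := Summable.tsum_le_tsum
        (fun n => mul_le_mul_of_nonneg_left ((abs_le.mp (hfb n v)).2) (hwpos n).le)
        (hsummev v) (hwsummable.mul_right ‖v‖)
      calc gL v ≤ ∑' n, w n * ‖v‖ := this
        _ = (∑' n, w n) * ‖v‖ := tsum_mul_right
        _ = ‖v‖ := by rw [hwsum, one_mul]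
    have h2 : -‖v‖ ≤ gL v := by
      have := Summable.tsum_le_tsum
        (fun n => mul_le_mul_of_nonneg_left ((abs_le.mp (hfb n v)).1) (hwpos n).le)
        (hwsummable.mul_right (-‖v‖)) (hsummev v)
      calc -‖v‖ = (∑' n, w n) * (-‖v‖) := by rw [hwsum, one_mul]
        _ = ∑' n, w n * (-‖v‖) := tsum_mul_right.symm
        _ ≤ gL v := this
    rw [abs_le]; exact ⟨h2, h1⟩
  let g : E →L[ℝ] ℝ := LinearMap.mkContinuous gL 1
    (fun v => by rw [Real.norm_eq_abs, one_mul]; exact hgLb v)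
  have hgap : ∀ v, g v = ∑' n, w n * f n v := fun v => rfl
  -- finite geometric sums
  have hgeom : ∀ k : ℕ, ∑ n ∈ Finset.range k, w n = 1 - (1/2:ℝ)^k := by
    intro k
    induction k with
    | zero => simp
    | succ k ih =>
        rw [Finset.sum_range_succ, ih, hwdef]
        simp only [pow_succ]
        ring
  -- evaluation of g at a m
  have hga : ∀ m, g (a m) = δ m * (1 - (1/2:ℝ)^m) := by
    intro m
    rw [hgap]
    rw [← Summable.sum_add_tsum_nat_add (f := fun n => w n * f n (a m)) (m+1) (hsummev (a m))]
    have hhead : ∑ n ∈ Finset.range (m+1), w n * f n (a m) = δ m * (1 - (1/2:ℝ)^(m+1)) := by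
      rw [Finset.sum_congr rfl (fun n hn => by
        rw [hfval n m, if_pos (Nat.lt_succ_iff.mp (Finset.mem_range.mp hn))])]
      rw [← Finset.sum_mul, hgeom (m+1)]
      ring
    have htail : ∑' i, w (i + (m+1)) * f (i + (m+1)) (a m) = -(δ m * (1/2:ℝ)^(m+1)) := by
      have h1 : ∀ i : ℕ, w (i + (m+1)) * f (i + (m+1)) (a m)
          = (-(δ m * (1/2:ℝ)^(m+1))) * ((1/2)^(i+1)) := by
        intro i
        have hv : f (i + (m+1)) (a m) = -δ m := by
          rw [hfval, if_neg (by omega)]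
        have hw2 : w (i + (m+1)) = ((1:ℝ)/2)^(m+1) * (1/2)^(i+1) := by
          simp only [hwdef]
          rw [show i + (m+1) + 1 = (m+1) + (i+1) by ring, pow_add]
        rw [hv, hw2]
        ring
      rw [tsum_congr h1, tsum_mul_left]
      have h2 : ∑' i : ℕ, ((1:ℝ)/2)^(i+1) = 1 := by
        calc ∑' i : ℕ, ((1:ℝ)/2)^(i+1) = ∑' i, w i := tsum_congr fun i => by simp [hwdef]
          _ = 1 := hwsum
      rw [h2, mul_one]
    rw [hhead, htail]
    have h3 : ((1:ℝ)/2)^m = 2 * (1/2)^(m+1) := by rw [pow_succ]; ring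
    rw [h3]; ring
  -- the attainer of h := g - Φ
  obtain ⟨x, hx1, hx2⟩ := hsup (g - Φ)
  have hham : ∀ m, (g - Φ) (a m) = δ m * (2 - (1/2:ℝ)^m) := by
    intro m
    rw [ContinuousLinearMap.sub_apply, hga m, hΦa m]
    ring
  have h2le : (2:ℝ) ≤ (g - Φ) x := by
    have h1 : Tendsto (fun m : ℕ => (1/2:ℝ)^m) atTop (nhds 0) :=
      tendsto_pow_atTop_nhds_zero_of_lt_one (by norm_num) (by norm_num)
    have hT : Tendsto (fun m => δ m * (2 - (1/2:ℝ)^m)) atTop (nhds 2) := by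
      have := hδ1.mul ((tendsto_const_nhds (x := (2:ℝ))).sub h1)
      simpa using this
    refine le_of_tendsto hT (Filter.Eventually.of_forall fun m => ?_)
    rw [← hham m]
    exact hx2 (a m) (ha m)
  -- pinning down the two parts
  have hgx_le : g x ≤ 1 := by
    rw [hgap]
    calc ∑' n, w n * f n x ≤ ∑' n, w n := by
          refine Summable.tsum_le_tsum (fun n => ?_) (hsummev x) hwsummable
          have hf1 : f n x ≤ 1 := le_trans (abs_le.mp (hfb n x)).2 hx1
          calc w n * f n x ≤ w n * 1 := mul_le_mul_of_nonneg_left hf1 (hwpos n).le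
            _ = w n := mul_one _
      _ = 1 := hwsum
  have hΦx_ge : (-1:ℝ) ≤ Φ x := by
    rw [hΦ]
    have h1 := (abs_le.mp (hLb x)).1
    linarith
  have hsubx : (g - Φ) x = g x - Φ x := ContinuousLinearMap.sub_apply g Φ x
  have hgx : g x = 1 := by linarith
  have hΦx : Φ x = -1 := by linarith
  -- every f n attains the value 1 at x
  have hfx1 : ∀ n, f n x ≤ 1 := fun n => le_trans (abs_le.mp (hfb n x)).2 hx1
  have hfx : ∀ n, f n x = 1 := by
    intro N
    have hs1 : Summable (fun n => w n * (1 - f n x)) := by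
      have h1 : (fun n => w n * (1 - f n x)) = fun n => w n - w n * f n x := by
        ext n; ring
      rw [h1]; exact hwsummable.sub (hsummev x)
    have hsum0 : ∑' n, w n * (1 - f n x) = 0 := by
      have h1 : ∑' n, w n * (1 - f n x) = (∑' n, w n) - ∑' n, w n * f n x := by
        rw [← Summable.tsum_sub hwsummable (hsummev x)]
        exact tsum_congr fun n => by ring
      rw [h1, hwsum, ← hgap, hgx]
      ring
    have hterm : w N * (1 - f N x) ≤ 0 := by
      rw [← hsum0]
      exact Summable.le_tsum hs1 N fun j _ => mul_nonneg (hwpos j).le (by linarith [hfx1 j])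
    nlinarith [hwpos N, hfx1 N]
  -- the contradiction
  have hc1 : Tendsto (fun n => f n x) (Filter.hyperfilter ℕ : Filter ℕ) (nhds 1) := by
    have h1 : (fun n => f n x) = fun _ => (1:ℝ) := funext hfx
    rw [h1]
    exact tendsto_const_nhds
  have hfinal : (1:ℝ) = L x := tendsto_nhds_unique hc1 (hL x)
  have : L x = -1 := by rw [← hΦ]; exact hΦx
  linarith
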